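/- arXiv:1406.0907 — 2 statements merged into one kernel-verified Lean document; each statement's English description precedes it below -/
import Mathlib

section
/- Let f, g ∈ R[t][∂;'] with deg_∂ f = m ≥ 1, deg_∂ g = n ≥ 1, and let V(f,g) ∈ R(t)^{(m+n)×(m+n)} be the differential Sylvester matrix whose rows are the coefficient vectors (in powers of ∂, padded to length m+n) of f, ∂f, ..., ∂^{n−1}f, g, ∂g, ..., ∂^{m−1}g. Then V(f,g) is singular over R(t) if and only if deg_∂ gcrd(f,g) ≥ 1. -/
open Polynomial

/-- Derivative d/dt on the field of real rational functions. -/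
noncomputable def ratDeriv (q : RatFunc ℝ) : RatFunc ℝ :=
  (algebraMap (Polynomial ℝ) (RatFunc ℝ) (derivative q.num) *
      algebraMap (Polynomial ℝ) (RatFunc ℝ) q.denom -
    algebraMap (Polynomial ℝ) (RatFunc ℝ) q.num *
      algebraMap (Polynomial ℝ) (RatFunc ℝ) (derivative q.denom)) /
    (algebraMap (Polynomial ℝ) (RatFunc ℝ) q.denom) ^ 2

/-- Left multiplication by ∂ in R(t)[∂;′]: ∂·(a∂^i) = a∂^(i+1) + a′∂^i. -/
noncomputable def dMul (g : Polynomial (RatFunc ℝ)) : Polynomial (RatFunc ℝ) :=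
  X * g + g.sum fun i a => C (ratDeriv a) * X ^ i

/-- The skew (Ore) multiplication in R(t)[∂;′]. -/
noncomputable def skewMul (f g : Polynomial (RatFunc ℝ)) : Polynomial (RatFunc ℝ) :=
  f.sum fun i a => C a * dMul^[i] g


/-- h divides f on the right in R(t)[∂;′]. -/
def OreRightDvd (h f : Polynomial (RatFunc ℝ)) : Prop := ∃ u, f = skewMul u h

/-- h is a greatest common right divisor of f and g. -/
def IsGCRD (f g h : Polynomial (RatFunc ℝ)) : Prop :=
  OreRightDvd h f ∧ OreRightDvd h g ∧
    ∀ h2, OreRightDvd h2 f → OreRightDvd h2 g → h2.degree ≤ h.degree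


/-- The differential Sylvester matrix of f and g: rows are the coefficient
vectors of ∂^i f (0 ≤ i < n) followed by those of ∂^i g (0 ≤ i < m). -/
noncomputable def sylv (f g : Polynomial (RatFunc ℝ)) (m n : ℕ) :
    Matrix (Fin (m + n)) (Fin (m + n)) (RatFunc ℝ) :=
  Matrix.of fun i j =>
    if (i : ℕ) < n then (dMul^[(i : ℕ)] f).coeff j
    else (dMul^[(i : ℕ) - n] g).coeff j

/-- f has coefficients in R[t] ⊆ R(t). -/
def PolyCoeffs (f : Polynomial (RatFunc ℝ)) : Prop :=
  ∀ i, ∃ p : Polynomial ℝ, f.coeff i = algebraMap (Polynomial ℝ) (RatFunc ℝ) p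

local notation "K" => RatFunc ℝ
local notation "aM" => algebraMap (Polynomial ℝ) (RatFunc ℝ)

lemma aM_inj : Function.Injective (aM) := IsFractionRing.injective (Polynomial ℝ) K

lemma aM_ne_zero {p : Polynomial ℝ} (h : p ≠ 0) : (aM p : K) ≠ 0 :=
  (map_ne_zero_iff _ aM_inj).mpr h

lemma ratDeriv_spec (p₁ p₂ : Polynomial ℝ) (h : p₂ ≠ 0) :
    ratDeriv (aM p₁ / aM p₂) =
      (aM (derivative p₁) * aM p₂ - aM p₁ * aM (derivative p₂)) / (aM p₂) ^ 2 := by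
  set x : K := aM p₁ / aM p₂ with hx
  have hp₂ : (aM p₂ : K) ≠ 0 := aM_ne_zero h
  have hdne : x.denom ≠ 0 := RatFunc.denom_ne_zero x
  have hd : (aM x.denom : K) ≠ 0 := aM_ne_zero hdne
  have h1 : (aM x.num : K) * aM p₂ = aM p₁ * aM x.denom := by
    rw [← div_eq_div_iff hd hp₂, RatFunc.num_div_denom]
  have e : x.num * p₂ = p₁ * x.denom := aM_inj (by rw [map_mul, map_mul]; exact h1)
  have e' : derivative x.num * p₂ + x.num * derivative p₂
      = derivative p₁ * x.denom + p₁ * derivative x.denom := by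
    have := congrArg derivative e
    rwa [derivative_mul, derivative_mul] at this
  have E : (aM x.num : K) * aM p₂ = aM p₁ * aM x.denom := h1
  have E' : (aM (derivative x.num) : K) * aM p₂ + aM x.num * aM (derivative p₂)
      = aM (derivative p₁) * aM x.denom + aM p₁ * aM (derivative x.denom) := by
    have := congrArg (aM) e'
    simpa [map_add, map_mul] using this
  rw [ratDeriv]
  rw [div_eq_div_iff (pow_ne_zero 2 hd) (pow_ne_zero 2 hp₂)]
  linear_combination (aM p₂ * aM x.denom) * E'
    - (aM (derivative p₂) * aM x.denom + aM p₂ * aM (derivative x.denom)) * E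

lemma ratDeriv_zero : ratDeriv 0 = 0 := by
  simp [ratDeriv]

lemma ratDeriv_one : ratDeriv 1 = 0 := by
  simp [ratDeriv]

lemma ratDeriv_add (x y : K) : ratDeriv (x + y) = ratDeriv x + ratDeriv y := by
  obtain ⟨N1, D1, hD1, rfl⟩ : ∃ N D, D ≠ 0 ∧ x = aM N / aM D :=
    ⟨x.num, x.denom, RatFunc.denom_ne_zero x, (RatFunc.num_div_denom x).symm⟩
  obtain ⟨N2, D2, hD2, rfl⟩ : ∃ N D, D ≠ 0 ∧ y = aM N / aM D :=
    ⟨y.num, y.denom, RatFunc.denom_ne_zero y, (RatFunc.num_div_denom y).symm⟩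
  have hd1 : (aM D1 : K) ≠ 0 := aM_ne_zero hD1
  have hd2 : (aM D2 : K) ≠ 0 := aM_ne_zero hD2
  have hxy : (aM N1 : K) / aM D1 + aM N2 / aM D2
      = aM (N1 * D2 + N2 * D1) / aM (D1 * D2) := by
    rw [div_add_div _ _ hd1 hd2, map_add, map_mul, map_mul, map_mul]
    congr 1
    ring
  rw [hxy, ratDeriv_spec _ _ (mul_ne_zero hD1 hD2), ratDeriv_spec _ _ hD1,
    ratDeriv_spec _ _ hD2]
  simp only [derivative_add, derivative_mul, map_add, map_mul]
  field_simp
  ring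

lemma ratDeriv_mul (x y : K) : ratDeriv (x * y) = ratDeriv x * y + x * ratDeriv y := by
  obtain ⟨N1, D1, hD1, rfl⟩ : ∃ N D, D ≠ 0 ∧ x = aM N / aM D :=
    ⟨x.num, x.denom, RatFunc.denom_ne_zero x, (RatFunc.num_div_denom x).symm⟩
  obtain ⟨N2, D2, hD2, rfl⟩ : ∃ N D, D ≠ 0 ∧ y = aM N / aM D :=
    ⟨y.num, y.denom, RatFunc.denom_ne_zero y, (RatFunc.num_div_denom y).symm⟩
  have hd1 : (aM D1 : K) ≠ 0 := aM_ne_zero hD1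
  have hd2 : (aM D2 : K) ≠ 0 := aM_ne_zero hD2
  have hxy : (aM N1 : K) / aM D1 * (aM N2 / aM D2) = aM (N1 * N2) / aM (D1 * D2) := by
    rw [div_mul_div_comm, map_mul, map_mul]
  rw [hxy, ratDeriv_spec _ _ (mul_ne_zero hD1 hD2), ratDeriv_spec _ _ hD1,
    ratDeriv_spec _ _ hD2]
  simp only [derivative_mul, map_add, map_mul]
  field_simp
  ring

/-! ### Section 2: Dp and dMul -/

noncomputable def Dp (p : Polynomial K) : Polynomial K :=
  p.sum fun i a => C (ratDeriv a) * X ^ i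

lemma dMul_def (g : Polynomial K) : dMul g = X * g + Dp g := rfl

lemma coeff_Dp (p : Polynomial K) (j : ℕ) : (Dp p).coeff j = ratDeriv (p.coeff j) := by
  rw [Dp, Polynomial.sum_def, finset_sum_coeff]
  simp only [coeff_C_mul, coeff_X_pow, mul_ite, mul_one, mul_zero]
  rw [Finset.sum_eq_single j]
  · simp
  · intro b _ hb
    rw [if_neg (fun h => hb h.symm)]
  · intro hj
    rw [if_pos rfl, Polynomial.notMem_support_iff.mp hj, ratDeriv_zero]

lemma Dp_zero : Dp 0 = 0 := by
  ext j; simp [coeff_Dp, ratDeriv_zero]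

lemma Dp_add (p q : Polynomial K) : Dp (p + q) = Dp p + Dp q := by
  ext j; simp [coeff_Dp, ratDeriv_add]

noncomputable def ratDerivHom : RatFunc ℝ →+ RatFunc ℝ :=
  { toFun := ratDeriv, map_zero' := ratDeriv_zero, map_add' := ratDeriv_add }

lemma Dp_mul (p q : Polynomial K) : Dp (p * q) = Dp p * q + p * Dp q := by
  ext j
  rw [coeff_Dp, coeff_add, coeff_mul, coeff_mul, coeff_mul]
  rw [show (ratDeriv : K → K) = ratDerivHom from rfl, map_sum]
  rw [← Finset.sum_add_distrib]
  refine Finset.sum_congr rfl fun x _ => ?_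
  simp only [ratDerivHom, AddMonoidHom.coe_mk, ZeroHom.coe_mk]
  rw [ratDeriv_mul, coeff_Dp, coeff_Dp]

lemma Dp_C (a : K) : Dp (C a) = C (ratDeriv a) := by
  ext j
  rw [coeff_Dp, coeff_C, coeff_C, apply_ite ratDeriv, ratDeriv_zero]

lemma degree_Dp_le (p : Polynomial K) : (Dp p).degree ≤ p.degree := by
  rw [Polynomial.degree_le_iff_coeff_zero]
  intro j hj
  rw [coeff_Dp, coeff_eq_zero_of_degree_lt hj, ratDeriv_zero]

lemma dMul_zero : dMul 0 = 0 := by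
  rw [dMul_def, Dp_zero, mul_zero, add_zero]

lemma dMul_add (p q : Polynomial K) : dMul (p + q) = dMul p + dMul q := by
  rw [dMul_def, dMul_def, dMul_def, Dp_add]
  ring

lemma dMul_C_mul (a : K) (p : Polynomial K) :
    dMul (C a * p) = C a * dMul p + C (ratDeriv a) * p := by
  rw [dMul_def, dMul_def, Dp_mul, Dp_C]
  ring

lemma degree_dMul {p : Polynomial K} (hp : p ≠ 0) : (dMul p).degree = p.degree + 1 := by
  have hX : (X * p).degree = p.degree + 1 := by
    rw [degree_mul, degree_X, add_comm]
  have h2 : (Dp p).degree < (X * p).degree := by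
    rw [hX]
    exact lt_of_le_of_lt (degree_Dp_le p)
      (by rw [degree_eq_natDegree hp]; exact_mod_cast lt_add_one _)
  rw [dMul_def, degree_add_eq_left_of_degree_lt h2, hX]

lemma dMul_ne_zero {p : Polynomial K} (hp : p ≠ 0) : dMul p ≠ 0 := by
  intro h
  have := degree_dMul hp
  rw [h, degree_zero, degree_eq_natDegree hp] at this
  exact absurd this.symm (by simp)

lemma natDegree_dMul {p : Polynomial K} (hp : p ≠ 0) : (dMul p).natDegree = p.natDegree + 1 := by
  have := degree_dMul hp
  rw [degree_eq_natDegree hp, degree_eq_natDegree (dMul_ne_zero hp)] at this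
  exact_mod_cast this

lemma leadingCoeff_dMul {p : Polynomial K} (hp : p ≠ 0) :
    (dMul p).leadingCoeff = p.leadingCoeff := by
  rw [leadingCoeff, natDegree_dMul hp, dMul_def, coeff_add, coeff_X_mul, coeff_Dp,
    coeff_natDegree_succ_eq_zero, ratDeriv_zero, add_zero, leadingCoeff]

lemma dMul_iter_zero (k : ℕ) : dMul^[k] 0 = 0 := Function.iterate_fixed dMul_zero k

lemma dMul_iter_ne_zero {p : Polynomial K} (hp : p ≠ 0) (k : ℕ) : dMul^[k] p ≠ 0 := by
  induction k with
  | zero => exact hp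
  | succ k ih => rw [Function.iterate_succ_apply']; exact dMul_ne_zero ih

lemma natDegree_dMul_iter {p : Polynomial K} (hp : p ≠ 0) (k : ℕ) :
    (dMul^[k] p).natDegree = p.natDegree + k := by
  induction k with
  | zero => rfl
  | succ k ih =>
    rw [Function.iterate_succ_apply', natDegree_dMul (dMul_iter_ne_zero hp k), ih, Nat.add_assoc]

lemma leadingCoeff_dMul_iter {p : Polynomial K} (hp : p ≠ 0) (k : ℕ) :
    (dMul^[k] p).leadingCoeff = p.leadingCoeff := by
  induction k with
  | zero => rfl
  | succ k ih =>
    rw [Function.iterate_succ_apply', leadingCoeff_dMul (dMul_iter_ne_zero hp k), ih]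

lemma degree_dMul_iter_le (p : Polynomial K) (k : ℕ) :
    (dMul^[k] p).degree ≤ p.degree + k := by
  by_cases hp : p = 0
  · subst hp; rw [dMul_iter_zero]; simp
  · rw [degree_eq_natDegree (dMul_iter_ne_zero hp k), degree_eq_natDegree hp,
      natDegree_dMul_iter hp k]
    exact_mod_cast le_refl _

lemma dMul_iter_add (k : ℕ) (p q : Polynomial K) :
    dMul^[k] (p + q) = dMul^[k] p + dMul^[k] q := by
  induction k generalizing p q with
  | zero => rfl
  | succ k ih => rw [Function.iterate_succ_apply, Function.iterate_succ_apply,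
      Function.iterate_succ_apply, dMul_add, ih]

/-! ### Section 3: skewMul algebra -/

lemma skewMul_monomial (i : ℕ) (a : K) (g : Polynomial K) :
    skewMul (monomial i a) g = C a * dMul^[i] g := by
  rw [skewMul, Polynomial.sum_monomial_index]
  rw [map_zero, zero_mul]

lemma zero_skewMul (g : Polynomial K) : skewMul 0 g = 0 := by
  rw [skewMul, Polynomial.sum_zero_index]

lemma skewMul_zero (f : Polynomial K) : skewMul f 0 = 0 := by
  simp [skewMul, dMul_iter_zero, Polynomial.sum_def]

lemma add_skewMul (f₁ f₂ g : Polynomial K) :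
    skewMul (f₁ + f₂) g = skewMul f₁ g + skewMul f₂ g := by
  rw [skewMul, skewMul, skewMul, Polynomial.sum_add_index]
  · intro i; rw [map_zero, zero_mul]
  · intro i b₁ b₂; rw [map_add, add_mul]

lemma neg_skewMul (f g : Polynomial K) : skewMul (-f) g = -skewMul f g := by
  have h := add_skewMul (-f) f g
  rw [neg_add_cancel, zero_skewMul] at h
  exact eq_neg_of_add_eq_zero_left h.symm

lemma sub_skewMul (f₁ f₂ g : Polynomial K) :
    skewMul (f₁ - f₂) g = skewMul f₁ g - skewMul f₂ g := by
  rw [sub_eq_add_neg, add_skewMul, neg_skewMul, sub_eq_add_neg]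

lemma skewMul_add_right (f g₁ g₂ : Polynomial K) :
    skewMul f (g₁ + g₂) = skewMul f g₁ + skewMul f g₂ := by
  rw [skewMul, skewMul, skewMul, Polynomial.sum_def, Polynomial.sum_def, Polynomial.sum_def,
    ← Finset.sum_add_distrib]
  exact Finset.sum_congr rfl fun i _ => by rw [dMul_iter_add, mul_add]

lemma skewMul_neg_right (f g : Polynomial K) : skewMul f (-g) = -skewMul f g := by
  have h := skewMul_add_right f (-g) g
  rw [neg_add_cancel, skewMul_zero] at h
  exact eq_neg_of_add_eq_zero_left h.symm

lemma skewMul_sub_right (f g₁ g₂ : Polynomial K) :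
    skewMul f (g₁ - g₂) = skewMul f g₁ - skewMul f g₂ := by
  rw [sub_eq_add_neg, skewMul_add_right, skewMul_neg_right, sub_eq_add_neg]

lemma C_mul_skewMul (c : K) (f g : Polynomial K) :
    skewMul (C c * f) g = C c * skewMul f g := by
  induction f using Polynomial.induction_on' with
  | add p q hp hq => rw [mul_add, add_skewMul, hp, hq, add_skewMul, mul_add]
  | monomial i a =>
    rw [C_mul_monomial, skewMul_monomial, skewMul_monomial, map_mul, mul_assoc]

lemma dMul_monomial (i : ℕ) (a : K) :
    dMul (monomial i a) = monomial (i + 1) a + monomial i (ratDeriv a) := by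
  rw [dMul_def]
  congr 1
  · exact X_mul_monomial i a
  · ext j
    rw [coeff_Dp, coeff_monomial, coeff_monomial, apply_ite ratDeriv, ratDeriv_zero]

lemma dMul_skewMul (f g : Polynomial K) : skewMul (dMul f) g = dMul (skewMul f g) := by
  induction f using Polynomial.induction_on' with
  | add p q hp hq => rw [dMul_add, add_skewMul, hp, hq, add_skewMul, dMul_add]
  | monomial i a =>
    rw [dMul_monomial, add_skewMul, skewMul_monomial, skewMul_monomial, skewMul_monomial,
      dMul_C_mul, ← Function.iterate_succ_apply' dMul]

lemma dMul_iter_skewMul (k : ℕ) (f g : Polynomial K) :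
    skewMul (dMul^[k] f) g = dMul^[k] (skewMul f g) := by
  induction k generalizing f with
  | zero => rfl
  | succ k ih =>
    rw [Function.iterate_succ_apply', Function.iterate_succ_apply', dMul_skewMul, ih]

lemma skewMul_assoc (f g h : Polynomial K) :
    skewMul (skewMul f g) h = skewMul f (skewMul g h) := by
  induction f using Polynomial.induction_on' with
  | add p q hp hq => rw [add_skewMul, add_skewMul, add_skewMul, hp, hq]
  | monomial i a =>
    rw [skewMul_monomial, C_mul_skewMul, dMul_iter_skewMul, skewMul_monomial]

lemma C_skewMul (c : K) (g : Polynomial K) : skewMul (C c) g = C c * g := by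
  rw [← Polynomial.monomial_zero_left, skewMul_monomial, Function.iterate_zero_apply,
    Polynomial.monomial_zero_left]

lemma one_skewMul (g : Polynomial K) : skewMul 1 g = g := by
  have := C_skewMul 1 g
  rwa [map_one, one_mul] at this

lemma Dp_X_pow (i : ℕ) : Dp (X ^ i : Polynomial K) = 0 := by
  ext j
  rw [coeff_Dp, coeff_X_pow, apply_ite ratDeriv, ratDeriv_zero, ratDeriv_one]
  simp

lemma dMul_iter_one (i : ℕ) : dMul^[i] (1 : Polynomial K) = X ^ i := by
  induction i with
  | zero => simp
  | succ i ih =>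
    rw [Function.iterate_succ_apply', ih, dMul_def, Dp_X_pow, add_zero, ← pow_succ']

lemma skewMul_one (f : Polynomial K) : skewMul f 1 = f := by
  conv_rhs => rw [← Polynomial.sum_C_mul_X_pow_eq f]
  rw [skewMul, Polynomial.sum_def, Polynomial.sum_def]
  exact Finset.sum_congr rfl fun i _ => by rw [dMul_iter_one]

/-! ### Section 3b: degrees of skewMul -/

lemma degree_skewMul_le (f g : Polynomial K) :
    (skewMul f g).degree ≤ f.degree + g.degree := by
  rw [skewMul, Polynomial.sum_def]
  refine (degree_sum_le _ _).trans (Finset.sup_le fun i hi => ?_)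
  have hc : (C (f.coeff i) * dMul^[i] g).degree ≤ (dMul^[i] g).degree := by
    simpa [Polynomial.smul_eq_C_mul] using degree_smul_le (f.coeff i) (dMul^[i] g)
  refine hc.trans ((degree_dMul_iter_le g i).trans ?_)
  rw [add_comm f.degree g.degree]
  exact add_le_add le_rfl (le_degree_of_ne_zero (Polynomial.mem_support_iff.mp hi))

lemma coeff_skewMul_top {f g : Polynomial K} (hf : f ≠ 0) (hg : g ≠ 0) :
    (skewMul f g).coeff (f.natDegree + g.natDegree) = f.leadingCoeff * g.leadingCoeff := by
  rw [skewMul, Polynomial.sum_def, finset_sum_coeff]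
  rw [Finset.sum_eq_single f.natDegree]
  · rw [coeff_C_mul, add_comm f.natDegree g.natDegree, ← natDegree_dMul_iter hg]
    rw [show (dMul^[f.natDegree] g).coeff (dMul^[f.natDegree] g).natDegree
        = (dMul^[f.natDegree] g).leadingCoeff from rfl, leadingCoeff_dMul_iter hg,
      coeff_natDegree]
  · intro i hi hne
    have hilt : i < f.natDegree :=
      lt_of_le_of_ne (le_natDegree_of_ne_zero (Polynomial.mem_support_iff.mp hi)) hne
    have hz : (dMul^[i] g).coeff (f.natDegree + g.natDegree) = 0 := by
      refine coeff_eq_zero_of_degree_lt ?_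
      rw [degree_eq_natDegree (dMul_iter_ne_zero hg i), natDegree_dMul_iter hg]
      exact_mod_cast by omega
    rw [coeff_C_mul, hz, mul_zero]
  · intro hns
    exact absurd (Polynomial.natDegree_mem_support_of_nonzero hf) hns

lemma skewMul_ne_zero {f g : Polynomial K} (hf : f ≠ 0) (hg : g ≠ 0) : skewMul f g ≠ 0 := by
  intro h
  have := coeff_skewMul_top hf hg
  rw [h, coeff_zero] at this
  exact (mul_ne_zero (leadingCoeff_ne_zero.mpr hf) (leadingCoeff_ne_zero.mpr hg)) this.symm

lemma degree_skewMul {f g : Polynomial K} (hf : f ≠ 0) (hg : g ≠ 0) :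
    (skewMul f g).degree = ((f.natDegree + g.natDegree : ℕ) : WithBot ℕ) := by
  refine le_antisymm ?_ ?_
  · refine (degree_skewMul_le f g).trans ?_
    rw [degree_eq_natDegree hf, degree_eq_natDegree hg]
    exact_mod_cast le_rfl
  · refine le_degree_of_ne_zero ?_
    rw [coeff_skewMul_top hf hg]
    exact mul_ne_zero (leadingCoeff_ne_zero.mpr hf) (leadingCoeff_ne_zero.mpr hg)

lemma natDegree_skewMul {f g : Polynomial K} (hf : f ≠ 0) (hg : g ≠ 0) :
    (skewMul f g).natDegree = f.natDegree + g.natDegree := by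
  have := degree_skewMul hf hg
  rw [degree_eq_natDegree (skewMul_ne_zero hf hg)] at this
  exact_mod_cast this

lemma leadingCoeff_skewMul {f g : Polynomial K} (hf : f ≠ 0) (hg : g ≠ 0) :
    (skewMul f g).leadingCoeff = f.leadingCoeff * g.leadingCoeff := by
  rw [leadingCoeff, natDegree_skewMul hf hg, coeff_skewMul_top hf hg]

lemma skewMul_eq_zero_right {f g : Polynomial K} (hg : g ≠ 0) (h : skewMul f g = 0) :
    f = 0 := by
  by_contra hf
  exact skewMul_ne_zero hf hg h

lemma degree_skewMul_lt {s p : Polynomial K} (k l : ℕ)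
    (hs : s.degree < (k : WithBot ℕ)) (hp : p.degree ≤ (l : WithBot ℕ)) :
    (skewMul s p).degree < ((k + l : ℕ) : WithBot ℕ) := by
  by_cases hs0 : s = 0
  · rw [hs0, zero_skewMul, degree_zero]; exact WithBot.bot_lt_coe _
  by_cases hp0 : p = 0
  · rw [hp0, skewMul_zero, degree_zero]; exact WithBot.bot_lt_coe _
  rw [degree_skewMul hs0 hp0]
  rw [degree_eq_natDegree hs0] at hs
  rw [degree_eq_natDegree hp0] at hp
  have h1 : s.natDegree < k := by exact_mod_cast hs
  have h2 : p.natDegree ≤ l := by exact_mod_cast hp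
  exact_mod_cast by omega

/-! ### Section 4: right division -/

lemma degree_pos_bot {h : Polynomial K} (hh : h ≠ 0) : (⊥ : WithBot ℕ) < h.degree :=
  bot_lt_iff_ne_bot.mpr fun hb => hh (degree_eq_bot.mp hb)

lemma skew_div_aux (h : Polynomial K) (hh : h ≠ 0) :
    ∀ d : ℕ, ∀ f : Polynomial K, f.natDegree ≤ d →
      ∃ q r, f = skewMul q h + r ∧ r.degree < h.degree := by
  classical
  intro d
  induction d using Nat.strong_induction_on with
  | _ d ih =>
    intro f hfd
    by_cases hlt : f.degree < h.degree
    · exact ⟨0, f, by rw [zero_skewMul, zero_add], hlt⟩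
    push_neg at hlt
    have hf0 : f ≠ 0 := by
      intro h0
      rw [h0, degree_zero] at hlt
      exact absurd (le_bot_iff.mp hlt) fun hb => hh (degree_eq_bot.mp hb)
    have hdle : h.natDegree ≤ f.natDegree := natDegree_le_natDegree hlt
    set c : K := f.leadingCoeff / h.leadingCoeff with hcdef
    have hc : c ≠ 0 := div_ne_zero (leadingCoeff_ne_zero.mpr hf0) (leadingCoeff_ne_zero.mpr hh)
    set mo : Polynomial K := monomial (f.natDegree - h.natDegree) c with hmodef
    have hmo : mo ≠ 0 := by
      rw [hmodef, Ne, monomial_eq_zero_iff]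
      exact hc
    have hdeg : (skewMul mo h).natDegree = f.natDegree := by
      rw [natDegree_skewMul hmo hh, hmodef, natDegree_monomial, if_neg hc]
      omega
    have hlc : (skewMul mo h).leadingCoeff = f.leadingCoeff := by
      rw [leadingCoeff_skewMul hmo hh, hmodef, leadingCoeff_monomial, hcdef,
        div_mul_cancel₀ _ (leadingCoeff_ne_zero.mpr hh)]
    have hdegeq : f.degree = (skewMul mo h).degree := by
      rw [degree_eq_natDegree hf0, degree_eq_natDegree (skewMul_ne_zero hmo hh), hdeg]
    have hsub : (f - skewMul mo h).degree < f.degree := degree_sub_lt hdegeq hf0 hlc.symm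
    by_cases h0 : f - skewMul mo h = 0
    · refine ⟨mo, 0, ?_, by rw [degree_zero]; exact degree_pos_bot hh⟩
      rw [add_zero, ← sub_eq_zero, h0]
    · have hlt2 : (f - skewMul mo h).natDegree < f.natDegree := natDegree_lt_natDegree h0 hsub
      obtain ⟨q', r', heq, hr'⟩ :=
        ih (f - skewMul mo h).natDegree (by omega) (f - skewMul mo h) le_rfl
      refine ⟨mo + q', r', ?_, hr'⟩
      rw [add_skewMul]
      have := heq
      rw [sub_eq_iff_eq_add] at this
      rw [this]
      ring

lemma skew_div (h : Polynomial K) (hh : h ≠ 0) (f : Polynomial K) :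
    ∃ q r, f = skewMul q h + r ∧ r.degree < h.degree :=
  skew_div_aux h hh f.natDegree f le_rfl

/-! ### Section 5: the right ideal and the GCRD -/

def InIdeal (f g p : Polynomial K) : Prop :=
  ∃ u v, p = skewMul u f + skewMul v g

lemma inIdeal_self_left (f g : Polynomial K) : InIdeal f g f :=
  ⟨1, 0, by rw [one_skewMul, zero_skewMul, add_zero]⟩

lemma inIdeal_self_right (f g : Polynomial K) : InIdeal f g g :=
  ⟨0, 1, by rw [one_skewMul, zero_skewMul, zero_add]⟩

lemma inIdeal_sub {f g p q : Polynomial K} (hp : InIdeal f g p) (hq : InIdeal f g q) :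
    InIdeal f g (p - q) := by
  obtain ⟨u, v, rfl⟩ := hp
  obtain ⟨u', v', rfl⟩ := hq
  exact ⟨u - u', v - v', by rw [sub_skewMul, sub_skewMul]; ring⟩

lemma inIdeal_skewMul {f g p : Polynomial K} (w : Polynomial K) (hp : InIdeal f g p) :
    InIdeal f g (skewMul w p) := by
  obtain ⟨u, v, rfl⟩ := hp
  exact ⟨skewMul w u, skewMul w v, by rw [skewMul_add_right, skewMul_assoc, skewMul_assoc]⟩

lemma exists_gcrd (f g : Polynomial K) (hf : f ≠ 0) :
    ∃ h, h ≠ 0 ∧ InIdeal f g h ∧ (∀ p, InIdeal f g p → OreRightDvd h p) ∧ IsGCRD f g h := by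
  set S : Set ℕ := {d | ∃ p, InIdeal f g p ∧ p ≠ 0 ∧ p.natDegree = d} with hS
  have hSne : S.Nonempty := ⟨f.natDegree, f, inIdeal_self_left f g, hf, rfl⟩
  obtain ⟨h, hmem, hh0, hdeg⟩ := Nat.sInf_mem hSne
  have hmin : ∀ p, InIdeal f g p → p ≠ 0 → h.natDegree ≤ p.natDegree := by
    intro p hp hp0
    rw [hdeg]
    exact Nat.sInf_le ⟨p, hp, hp0, rfl⟩
  have hdvd : ∀ p, InIdeal f g p → OreRightDvd h p := by
    intro p hp
    obtain ⟨q, r, heq, hr⟩ := skew_div h hh0 p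
    have hr0 : r = 0 := by
      by_contra hr0
      have hrI : InIdeal f g r := by
        have : r = p - skewMul q h := by rw [heq]; ring
        rw [this]
        exact inIdeal_sub hp (inIdeal_skewMul q hmem)
      exact absurd (natDegree_lt_natDegree hr0 hr) (not_lt.mpr (hmin r hrI hr0))
    exact ⟨q, by rw [heq, hr0, add_zero]⟩
  refine ⟨h, hh0, hmem, hdvd, hdvd f (inIdeal_self_left f g), hdvd g (inIdeal_self_right f g),
    ?_⟩
  intro h2 ⟨u', hu'⟩ ⟨v', hv'⟩
  obtain ⟨u, v, hhe⟩ := hmem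
  have hh2 : h = skewMul (skewMul u u' + skewMul v v') h2 := by
    rw [add_skewMul, skewMul_assoc, skewMul_assoc, ← hu', ← hv', hhe]
  have hw0 : skewMul u u' + skewMul v v' ≠ 0 := by
    intro hw
    rw [hw, zero_skewMul] at hh2
    exact hh0 hh2
  have hh20 : h2 ≠ 0 := by
    intro h20
    rw [h20, skewMul_zero] at hh2
    exact hh0 hh2
  rw [degree_eq_natDegree hh20, hh2,
    degree_eq_natDegree (skewMul_ne_zero hw0 hh20), natDegree_skewMul hw0 hh20]
  exact_mod_cast Nat.le_add_left _ _

/-! ### Section 6: linear algebra bridge -/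

lemma coeff_skewMul_sum (s f : Polynomial K) (N : ℕ) (hs : s.degree < (N : WithBot ℕ)) (j : ℕ) :
    (skewMul s f).coeff j = ∑ i ∈ Finset.range N, s.coeff i * (dMul^[i] f).coeff j := by
  rw [skewMul, Polynomial.sum_def, finset_sum_coeff]
  simp_rw [coeff_C_mul]
  refine Finset.sum_subset ?_ ?_
  · intro i hi
    have hs0 : s ≠ 0 := fun h => by simp [h] at hi
    have h1 : i ≤ s.natDegree := le_natDegree_of_ne_zero (Polynomial.mem_support_iff.mp hi)
    have h2 : s.natDegree < N := by
      rw [degree_eq_natDegree hs0] at hs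
      exact_mod_cast hs
    exact Finset.mem_range.mpr (by omega)
  · intro i _ hi
    rw [Polynomial.notMem_support_iff.mp hi, zero_mul]

lemma vecMul_sylv (f g : Polynomial K) (m n : ℕ) (s t : Polynomial K)
    (hs : s.degree < (n : WithBot ℕ)) (ht : t.degree < (m : WithBot ℕ))
    (c : Fin (m + n) → K)
    (hc : ∀ i : Fin (m + n), c i = if (i : ℕ) < n then s.coeff i else t.coeff ((i : ℕ) - n))
    (j : Fin (m + n)) :
    Matrix.vecMul c (sylv f g m n) j = (skewMul s f + skewMul t g).coeff j := by
  classical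
  have hterm : ∀ i : Fin (m + n), c i * sylv f g m n i j =
      (fun k : ℕ => if k < n then s.coeff k * (dMul^[k] f).coeff (j : ℕ)
        else t.coeff (k - n) * (dMul^[k - n] g).coeff (j : ℕ)) (i : ℕ) := by
    intro i
    by_cases hi : (i : ℕ) < n <;> simp [sylv, hc, hi]
  rw [Matrix.vecMul, dotProduct]
  rw [Finset.sum_congr rfl fun i _ => hterm i]
  rw [Fin.sum_univ_eq_sum_range
    (fun k : ℕ => if k < n then s.coeff k * (dMul^[k] f).coeff (j : ℕ)
      else t.coeff (k - n) * (dMul^[k - n] g).coeff (j : ℕ)) (m + n)]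
  rw [Finset.range_eq_Ico, ← Finset.sum_Ico_consecutive _ (Nat.zero_le n) (Nat.le_add_left n m)]
  rw [coeff_add, coeff_skewMul_sum s f n hs, coeff_skewMul_sum t g m ht]
  congr 1
  · rw [← Finset.range_eq_Ico]
    exact Finset.sum_congr rfl fun i hi => by rw [if_pos (Finset.mem_range.mp hi)]
  · rw [Finset.sum_Ico_eq_sum_range]
    have hmn : m + n - n = m := by omega
    rw [hmn]
    refine Finset.sum_congr rfl fun i _ => ?_
    rw [if_neg (by omega), Nat.add_sub_cancel_left]

lemma det_zero_of_rel (f g : Polynomial K) (m n : ℕ) (s t : Polynomial K)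
    (hst : s ≠ 0 ∨ t ≠ 0) (hs : s.degree < (n : WithBot ℕ)) (ht : t.degree < (m : WithBot ℕ))
    (hrel : skewMul s f + skewMul t g = 0) : (sylv f g m n).det = 0 := by
  classical
  set c : Fin (m + n) → K :=
    fun i => if (i : ℕ) < n then s.coeff i else t.coeff ((i : ℕ) - n) with hcdef
  have hsdeg : s ≠ 0 → s.natDegree < n := fun h0 => by
    rw [degree_eq_natDegree h0] at hs; exact_mod_cast hs
  have htdeg : t ≠ 0 → t.natDegree < m := fun h0 => by
    rw [degree_eq_natDegree h0] at ht; exact_mod_cast ht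
  have hc0 : c ≠ 0 := by
    rcases hst with h0 | h0
    · have hub := hsdeg h0
      intro hc
      have := congrFun hc ⟨s.natDegree, by omega⟩
      simp only [hcdef, Pi.zero_apply] at this
      rw [if_pos (by simpa using hub)] at this
      exact leadingCoeff_ne_zero.mpr h0 this
    · have hub := htdeg h0
      intro hc
      have := congrFun hc ⟨n + t.natDegree, by omega⟩
      simp only [hcdef, Pi.zero_apply] at this
      rw [if_neg (by simp), Nat.add_sub_cancel_left] at this
      exact leadingCoeff_ne_zero.mpr h0 this
  refine Matrix.exists_vecMul_eq_zero_iff.mp ⟨c, hc0, ?_⟩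
  funext j
  rw [vecMul_sylv f g m n s t hs ht c (fun i => rfl) j, hrel]
  rfl

lemma degree_sum_monomial_lt (N : ℕ) (a : ℕ → K) :
    (∑ i ∈ Finset.range N, monomial i (a i)).degree < (N : WithBot ℕ) := by
  refine lt_of_le_of_lt (degree_sum_le _ _) ?_
  refine (Finset.sup_lt_iff (WithBot.bot_lt_coe N)).mpr fun i hi => ?_
  refine lt_of_le_of_lt (degree_monomial_le i (a i)) ?_
  exact_mod_cast Nat.cast_lt.mpr (Finset.mem_range.mp hi)

lemma rel_of_det_zero (f g : Polynomial K) (m n : ℕ)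
    (hf0 : f ≠ 0) (hg0 : g ≠ 0)
    (hfm : f.degree ≤ (m : WithBot ℕ)) (hgn : g.degree ≤ (n : WithBot ℕ))
    (hdet : (sylv f g m n).det = 0) :
    ∃ s t : Polynomial K, s ≠ 0 ∧ t ≠ 0 ∧ s.degree < (n : WithBot ℕ) ∧
      t.degree < (m : WithBot ℕ) ∧ skewMul s f + skewMul t g = 0 := by
  classical
  obtain ⟨c, hc0, hcv⟩ := Matrix.exists_vecMul_eq_zero_iff.mpr hdet
  set c' : ℕ → K := fun k => if h : k < m + n then c ⟨k, h⟩ else 0 with hc'def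
  set s : Polynomial K := ∑ i ∈ Finset.range n, monomial i (c' i) with hsdef
  set t : Polynomial K := ∑ i ∈ Finset.range m, monomial i (c' (n + i)) with htdef
  have hs : s.degree < (n : WithBot ℕ) := degree_sum_monomial_lt n c'
  have ht : t.degree < (m : WithBot ℕ) := degree_sum_monomial_lt m (fun i => c' (n + i))
  have hscoeff : ∀ k, s.coeff k = if k < n then c' k else 0 := by
    intro k
    rw [hsdef, finset_sum_coeff]
    simp_rw [coeff_monomial]
    rw [Finset.sum_ite_eq' (Finset.range n) k (fun i => c' i)]
    simp [Finset.mem_range]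
  have htcoeff : ∀ k, t.coeff k = if k < m then c' (n + k) else 0 := by
    intro k
    rw [htdef, finset_sum_coeff]
    simp_rw [coeff_monomial]
    rw [Finset.sum_ite_eq' (Finset.range m) k (fun i => c' (n + i))]
    simp [Finset.mem_range]
  have hc : ∀ i : Fin (m + n), c i = if (i : ℕ) < n then s.coeff i else t.coeff ((i : ℕ) - n) := by
    intro i
    by_cases hi : (i : ℕ) < n
    · rw [if_pos hi, hscoeff, if_pos hi, hc'def]
      simp only [Fin.is_lt, dif_pos]
    · rw [if_neg hi, htcoeff, if_pos (by omega), hc'def]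
      have : n + ((i : ℕ) - n) = (i : ℕ) := by omega
      rw [this]
      simp only [Fin.is_lt, dif_pos]
  -- the combination is zero
  have hrel : skewMul s f + skewMul t g = 0 := by
    have hdeg : (skewMul s f + skewMul t g).degree < ((m + n : ℕ) : WithBot ℕ) := by
      refine lt_of_le_of_lt (degree_add_le _ _) (max_lt ?_ ?_)
      · have := degree_skewMul_lt n m hs hfm
        rwa [Nat.add_comm n m] at this
      · exact degree_skewMul_lt m n ht hgn
    ext k
    rw [coeff_zero]
    by_cases hk : k < m + n
    · have := congrFun hcv ⟨k, hk⟩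
      rw [vecMul_sylv f g m n s t hs ht c hc ⟨k, hk⟩] at this
      exact this
    · exact coeff_eq_zero_of_degree_lt
        (lt_of_lt_of_le hdeg (by exact_mod_cast Nat.le_of_not_lt hk))
  -- one of s, t is nonzero
  have hor : s ≠ 0 ∨ t ≠ 0 := by
    by_contra hcon
    push_neg at hcon
    apply hc0
    funext i
    rw [Pi.zero_apply, hc i]
    rcases Nat.lt_or_ge (i : ℕ) n with hi | hi
    · rw [if_pos hi, hcon.1, coeff_zero]
    · rw [if_neg (by omega), hcon.2, coeff_zero]
  have hsne : s ≠ 0 := by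
    rcases hor with h | h
    · exact h
    · intro hs0
      apply h
      rw [hs0, zero_skewMul, zero_add] at hrel
      exact skewMul_eq_zero_right hg0 hrel
  have htne : t ≠ 0 := by
    intro ht0
    apply hsne
    rw [ht0, zero_skewMul, add_zero] at hrel
    exact skewMul_eq_zero_right hf0 hrel
  exact ⟨s, t, hsne, htne, hs, ht, hrel⟩

/-! ### Section 7: the combination linear map -/

noncomputable def psiMap (f g : Polynomial K) (a b N : ℕ)
    (hN : ∀ s t : Polynomial K, s.degree < (a : WithBot ℕ) → t.degree < (b : WithBot ℕ) →
      (skewMul s f + skewMul t g).degree < (N : WithBot ℕ)) :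
    (degreeLT K a × degreeLT K b) →ₗ[K] degreeLT K N where
  toFun st := ⟨skewMul (st.1 : Polynomial K) f + skewMul (st.2 : Polynomial K) g,
    Polynomial.mem_degreeLT.mpr
      (hN _ _ (Polynomial.mem_degreeLT.mp st.1.2) (Polynomial.mem_degreeLT.mp st.2.2))⟩
  map_add' x y := Subtype.ext <| by
    simp only [Prod.fst_add, Prod.snd_add, Submodule.coe_add]
    rw [add_skewMul, add_skewMul]
    ring
  map_smul' d x := Subtype.ext <| by
    simp only [Prod.smul_fst, Prod.smul_snd, SetLike.val_smul, RingHom.id_apply,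
      Polynomial.smul_eq_C_mul]
    rw [C_mul_skewMul, C_mul_skewMul]
    ring

lemma psiMap_apply (f g : Polynomial K) (a b N : ℕ) (hN) (x : degreeLT K a × degreeLT K b) :
    (psiMap f g a b N hN x : Polynomial K)
      = skewMul (x.1 : Polynomial K) f + skewMul (x.2 : Polynomial K) g := rfl

instance fd_degreeLT (a : ℕ) : FiniteDimensional K (degreeLT K a) :=
  Module.Finite.equiv (Polynomial.degreeLTEquiv K a).symm

lemma finrank_degreeLT (a : ℕ) : Module.finrank K (degreeLT K a) = a := by
  rw [(Polynomial.degreeLTEquiv K a).finrank_eq, Module.finrank_fin_fun]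

/-! ### Section 8: the two directions -/

lemma not_inIdeal_one (f g : Polynomial K) (m n : ℕ)
    (hfd : f.degree = (m : WithBot ℕ)) (hgd : g.degree = (n : WithBot ℕ))
    (s t : Polynomial K) (hsne : s ≠ 0) (hs : s.degree < (n : WithBot ℕ))
    (ht : t.degree < (m : WithBot ℕ))
    (hrel : skewMul s f + skewMul t g = 0) (hone : InIdeal f g 1) : False := by
  have hf0 : f ≠ 0 := fun h0 => by rw [h0, degree_zero] at hfd; exact (by simp at hfd)
  have hg0 : g ≠ 0 := fun h0 => by rw [h0, degree_zero] at hgd; exact (by simp at hgd)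
  have hgn : g.natDegree = n := natDegree_eq_of_degree_eq_some hgd
  have hN : ∀ s' t' : Polynomial K, s'.degree < (n : WithBot ℕ) → t'.degree < (m : WithBot ℕ) →
      (skewMul s' f + skewMul t' g).degree < ((m + n : ℕ) : WithBot ℕ) := by
    intro s' t' hs' ht'
    refine lt_of_le_of_lt (degree_add_le _ _) (max_lt ?_ ?_)
    · have := degree_skewMul_lt n m hs' hfd.le
      rwa [Nat.add_comm n m] at this
    · exact degree_skewMul_lt m n ht' hgd.le
  set ψ := psiMap f g n m (m + n) hN with hψ
  have hnotinj : ¬Function.Injective ψ := by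
    intro hinj
    have hx : ψ ⟨⟨s, Polynomial.mem_degreeLT.mpr hs⟩, ⟨t, Polynomial.mem_degreeLT.mpr ht⟩⟩
        = ψ 0 := by
      refine Subtype.ext ?_
      rw [psiMap_apply, psiMap_apply]
      simp only [Prod.fst_zero, Prod.snd_zero, ZeroMemClass.coe_zero, zero_skewMul, add_zero]
      exact hrel
    have heq := hinj hx
    have hs0 : s = 0 := by
      simpa using congrArg (fun z : degreeLT K n × degreeLT K m => (z.1 : Polynomial K)) heq
    exact hsne hs0
  have hsurj : Function.Surjective ψ := by
    obtain ⟨u, v, hone_eq⟩ := hone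
    rintro ⟨p, hp⟩
    have hp' : p.degree < ((m + n : ℕ) : WithBot ℕ) := Polynomial.mem_degreeLT.mp hp
    have hP : p = skewMul (skewMul p u) f + skewMul (skewMul p v) g := by
      calc p = skewMul p 1 := (skewMul_one p).symm
        _ = skewMul p (skewMul u f + skewMul v g) := by rw [← hone_eq]
        _ = skewMul (skewMul p u) f + skewMul (skewMul p v) g := by
            rw [skewMul_add_right, skewMul_assoc, skewMul_assoc]
    obtain ⟨Q, r, hA, hrd⟩ := skew_div s hsne (skewMul p u)
    set T := skewMul p v - skewMul Q t with hT
    have e2 : skewMul t g = -skewMul s f := eq_neg_of_add_eq_zero_right hrel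
    have e3 : skewMul (skewMul p u) f = skewMul (skewMul Q s) f + skewMul r f := by
      rw [hA, add_skewMul]
    have e4 : skewMul (skewMul Q t) g = -skewMul (skewMul Q s) f := by
      rw [skewMul_assoc, e2, skewMul_neg_right, ← skewMul_assoc]
    have hpr : p = skewMul r f + skewMul T g := by
      rw [hT, sub_skewMul, e4, sub_neg_eq_add]
      conv_lhs => rw [hP, e3]
      ring
    have hrdn : r.degree < (n : WithBot ℕ) := hrd.trans hs
    have hTm : T.degree < (m : WithBot ℕ) := by
      by_cases hT0 : T = 0
      · rw [hT0, degree_zero]; exact WithBot.bot_lt_coe _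
      · have hTg : skewMul T g = p - skewMul r f := by rw [hpr]; ring
        have hlt : (skewMul T g).degree < ((m + n : ℕ) : WithBot ℕ) := by
          rw [hTg]
          refine lt_of_le_of_lt (degree_sub_le _ _) (max_lt hp' ?_)
          have := degree_skewMul_lt n m hrdn hfd.le
          rwa [Nat.add_comm n m] at this
        rw [degree_skewMul hT0 hg0, hgn] at hlt
        have : T.natDegree + n < m + n := by exact_mod_cast hlt
        have h5 : T.natDegree < m := by omega
        rw [degree_eq_natDegree hT0]
        exact_mod_cast h5
    exact ⟨⟨⟨r, Polynomial.mem_degreeLT.mpr hrdn⟩, ⟨T, Polynomial.mem_degreeLT.mpr hTm⟩⟩,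
      Subtype.ext (by rw [psiMap_apply]; exact hpr.symm)⟩
  haveI : Module.Free K (degreeLT K n) := Module.Free.of_divisionRing K _
  haveI : Module.Free K (degreeLT K m) := Module.Free.of_divisionRing K _
  have hrank : Module.finrank K (degreeLT K n × degreeLT K m)
      = Module.finrank K (degreeLT K (m + n)) := by
    rw [Module.finrank_prod, finrank_degreeLT, finrank_degreeLT, finrank_degreeLT]
    omega
  exact hnotinj ((LinearMap.injective_iff_surjective_of_finrank_eq_finrank hrank).mpr hsurj)


/-- The differential Sylvester matrix is singular over R(t) iff the GCRD is non-trivial. -/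
theorem sylv_singular_iff (f g : Polynomial (RatFunc ℝ)) (m n : ℕ)
    (hm : 1 ≤ m) (hn : 1 ≤ n)
    (hfd : f.degree = (m : WithBot ℕ)) (hgd : g.degree = (n : WithBot ℕ))
    (hfp : PolyCoeffs f) (hgp : PolyCoeffs g) :
    (sylv f g m n).det = 0 ↔ ∃ h, IsGCRD f g h ∧ 1 ≤ h.degree := by
  have hf0 : f ≠ 0 := fun h0 => by rw [h0, degree_zero] at hfd; exact (by simp at hfd)
  have hg0 : g ≠ 0 := fun h0 => by rw [h0, degree_zero] at hgd; exact (by simp at hgd)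
  have hfn : f.natDegree = m := natDegree_eq_of_degree_eq_some hfd
  have hgn : g.natDegree = n := natDegree_eq_of_degree_eq_some hgd
  constructor
  · intro hdet
    obtain ⟨s, t, hsne, htne, hs, ht, hrel⟩ :=
      rel_of_det_zero f g m n hf0 hg0 hfd.le hgd.le hdet
    obtain ⟨h, hh0, hhI, hdvd, hgcrd⟩ := exists_gcrd f g hf0
    refine ⟨h, hgcrd, ?_⟩
    by_contra hless
    push_neg at hless
    have hle0 : h.degree ≤ 0 := Nat.WithBot.lt_one_iff_le_zero.mp hless
    obtain ⟨ch, hch0, hCh⟩ : ∃ ch : RatFunc ℝ, ch ≠ 0 ∧ h = C ch := by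
      refine ⟨h.coeff 0, fun hc => hh0 ?_, eq_C_of_degree_le_zero hle0⟩
      rw [eq_C_of_degree_le_zero hle0, hc, map_zero]
    have hone : InIdeal f g 1 := by
      obtain ⟨u, v, he⟩ := hhI
      refine ⟨skewMul (C ch⁻¹) u, skewMul (C ch⁻¹) v, ?_⟩
      rw [skewMul_assoc, skewMul_assoc, ← skewMul_add_right, ← he, C_skewMul, hCh,
        ← map_mul, inv_mul_cancel₀ hch0, map_one]
    exact absurd (not_inIdeal_one f g m n hfd hgd s t hsne hs ht hrel hone) not_false
  · rintro ⟨h, ⟨⟨p, hfp'⟩, ⟨q, hgq'⟩, -⟩, hdeg1⟩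
    have hh0 : h ≠ 0 := fun h0 => by
      rw [h0, degree_zero] at hdeg1
      exact absurd hdeg1 (by simp)
    have hd1 : 1 ≤ h.natDegree := by
      have h1 := hdeg1
      rw [degree_eq_natDegree hh0] at h1
      exact_mod_cast h1
    have hp0 : p ≠ 0 := fun h0 => hf0 (by rw [hfp', h0, zero_skewMul])
    have hq0 : q ≠ 0 := fun h0 => hg0 (by rw [hgq', h0, zero_skewMul])
    have hpd : p.natDegree + h.natDegree = m := by
      rw [← hfn, hfp', natDegree_skewMul hp0 hh0]
    have hqd : q.natDegree + h.natDegree = n := by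
      rw [← hgn, hgq', natDegree_skewMul hq0 hh0]
    have hN' : ∀ s t : Polynomial (RatFunc ℝ),
        s.degree < ((q.natDegree + 1 : ℕ) : WithBot ℕ) →
        t.degree < ((p.natDegree + 1 : ℕ) : WithBot ℕ) →
        (skewMul s p + skewMul t q).degree
          < ((p.natDegree + q.natDegree + 1 : ℕ) : WithBot ℕ) := by
      intro s t hs ht
      refine lt_of_le_of_lt (degree_add_le _ _) (max_lt ?_ ?_)
      · have h2 := degree_skewMul_lt (q.natDegree + 1) p.natDegree hs degree_le_natDegree
        rwa [show q.natDegree + 1 + p.natDegree = p.natDegree + q.natDegree + 1 by omega] at h2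
      · have h2 := degree_skewMul_lt (p.natDegree + 1) q.natDegree ht degree_le_natDegree
        rwa [show p.natDegree + 1 + q.natDegree = p.natDegree + q.natDegree + 1 by omega] at h2
    set ψ' := psiMap p q (q.natDegree + 1) (p.natDegree + 1)
      (p.natDegree + q.natDegree + 1) hN' with hψ'
    haveI : Module.Free (RatFunc ℝ) (degreeLT (RatFunc ℝ) (q.natDegree + 1)) :=
      Module.Free.of_divisionRing _ _
    haveI : Module.Free (RatFunc ℝ) (degreeLT (RatFunc ℝ) (p.natDegree + 1)) :=
      Module.Free.of_divisionRing _ _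
    have hnotinj : ¬Function.Injective ψ' := by
      intro hinj
      have hle := LinearMap.finrank_le_finrank_of_injective hinj
      rw [Module.finrank_prod, finrank_degreeLT, finrank_degreeLT, finrank_degreeLT] at hle
      omega
    rw [Function.not_injective_iff] at hnotinj
    obtain ⟨x, y, hxy, hne⟩ := hnotinj
    set z := x - y with hz
    have hz0 : z ≠ 0 := sub_ne_zero_of_ne hne
    have hψz : skewMul (z.1 : Polynomial (RatFunc ℝ)) p
        + skewMul (z.2 : Polynomial (RatFunc ℝ)) q = 0 := by
      have h1 : ψ' z = 0 := by rw [hz, map_sub, hxy, sub_self]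
      have h2 : ((ψ' z : degreeLT (RatFunc ℝ) (p.natDegree + q.natDegree + 1))
          : Polynomial (RatFunc ℝ)) = 0 := by rw [h1]; rfl
      exact h2
    have hor : (z.1 : Polynomial (RatFunc ℝ)) ≠ 0 ∨ (z.2 : Polynomial (RatFunc ℝ)) ≠ 0 := by
      by_contra hcon
      push_neg at hcon
      exact hz0 (Prod.ext (Subtype.ext hcon.1) (Subtype.ext hcon.2))
    have hsd : (z.1 : Polynomial (RatFunc ℝ)).degree < (n : WithBot ℕ) := by
      refine lt_of_lt_of_le (Polynomial.mem_degreeLT.mp z.1.2) ?_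
      exact_mod_cast (by omega : q.natDegree + 1 ≤ n)
    have htd : (z.2 : Polynomial (RatFunc ℝ)).degree < (m : WithBot ℕ) := by
      refine lt_of_lt_of_le (Polynomial.mem_degreeLT.mp z.2.2) ?_
      exact_mod_cast (by omega : p.natDegree + 1 ≤ m)
    have hrel : skewMul (z.1 : Polynomial (RatFunc ℝ)) f
        + skewMul (z.2 : Polynomial (RatFunc ℝ)) g = 0 := by
      rw [hfp', hgq', ← skewMul_assoc, ← skewMul_assoc, ← add_skewMul, hψz, zero_skewMul]
    exact det_zero_of_rel f g m n _ _ hor hsd htd hrel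
end

section
/- Let f, g ∈ R[t][∂;'] with deg_∂ f ≤ m, deg_∂ g ≤ n, both of degree at most d ≥ 2 in t, and let V = V(f,g) be the differential Sylvester matrix. Then ‖V‖_F² ≤ d^{2n}‖f‖² + d^{2m}‖g‖², where ‖V‖_F² = Σ_{ij} ‖V_{ij}‖² sums the squared coefficient 2-norms of the polynomial entries. -/
open Polynomial

/-- Left multiplication by ∂ in R[t][∂;′]: ∂·(a∂^i) = a∂^(i+1) + a′∂^i. -/
noncomputable def dMulP (g : Polynomial (Polynomial ℝ)) : Polynomial (Polynomial ℝ) :=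
  X * g + g.sum fun i a => C (derivative a) * X ^ i

/-- The skew (Ore) multiplication in R[t][∂;′]. -/
noncomputable def skewMulP (f g : Polynomial (Polynomial ℝ)) : Polynomial (Polynomial ℝ) :=
  f.sum fun i a => C a * dMulP^[i] g


/-- The differential Sylvester matrix of f, g ∈ R[t][∂;′] over R[t]. -/
noncomputable def sylvP (f g : Polynomial (Polynomial ℝ)) (m n : ℕ) :
    Matrix (Fin (m + n)) (Fin (m + n)) (Polynomial ℝ) :=
  Matrix.of fun i j =>
    if (i : ℕ) < n then (dMulP^[(i : ℕ)] f).coeff j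
    else (dMulP^[(i : ℕ) - n] g).coeff j


/-- Squared coefficient 2-norm of p ∈ R[t]. -/
noncomputable def polyNormSq (p : Polynomial ℝ) : ℝ := p.sum fun _ a => a ^ 2

/-- Squared coefficient 2-norm of f ∈ R[t][∂;′]. -/
noncomputable def dNormSq (f : Polynomial (Polynomial ℝ)) : ℝ := f.sum fun _ a => polyNormSq a

open Finset


/-- coefficientwise derivative -/
noncomputable def derivMap (h : Polynomial (Polynomial ℝ)) : Polynomial (Polynomial ℝ) :=
  h.sum fun i a => C (derivative a) * X ^ i

lemma dMulP_eq (h : Polynomial (Polynomial ℝ)) : dMulP h = X * h + derivMap h := rfl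

lemma derivMap_coeff (h : Polynomial (Polynomial ℝ)) (j : ℕ) :
    (derivMap h).coeff j = derivative (h.coeff j) := by
  rw [derivMap, Polynomial.sum_def, finset_sum_coeff]
  simp only [coeff_C_mul, coeff_X_pow]
  by_cases hj : j ∈ h.support
  · rw [Finset.sum_eq_single j]
    · simp
    · intro b _ hbj; simp [Ne.symm hbj]
    · intro h'; exact absurd hj h'
  · rw [Finset.sum_eq_zero, Polynomial.notMem_support_iff.mp hj]
    · simp
    · intro b hb
      have : b ≠ j := by rintro rfl; exact hj hb
      simp [Ne.symm this]

lemma coeff_X_mul_zero' (h : Polynomial (Polynomial ℝ)) : (X * h).coeff 0 = 0 := by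
  rw [mul_comm, Polynomial.mul_coeff_zero]; simp

lemma derivMap_X_mul (h : Polynomial (Polynomial ℝ)) :
    derivMap (X * h) = X * derivMap h := by
  ext j
  cases j with
  | zero => rw [derivMap_coeff, coeff_X_mul_zero', coeff_X_mul_zero']; simp
  | succ j => rw [derivMap_coeff, Polynomial.coeff_X_mul, Polynomial.coeff_X_mul, derivMap_coeff]

lemma derivMap_add (a b : Polynomial (Polynomial ℝ)) :
    derivMap (a + b) = derivMap a + derivMap b := by
  ext j; simp [derivMap_coeff]

lemma derivMap_dMulP (h : Polynomial (Polynomial ℝ)) :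
    derivMap (dMulP h) = dMulP (derivMap h) := by
  rw [dMulP_eq, dMulP_eq, derivMap_add, derivMap_X_mul]

lemma derivMap_iterate_dMulP (l k : ℕ) (h : Polynomial (Polynomial ℝ)) :
    derivMap^[l] (dMulP^[k] h) = dMulP^[k] (derivMap^[l] h) := by
  induction l with
  | zero => rfl
  | succ l ih =>
    rw [Function.iterate_succ_apply', ih, Function.iterate_succ_apply']
    clear ih
    induction k with
    | zero => rfl
    | succ k ih2 =>
      rw [Function.iterate_succ_apply', Function.iterate_succ_apply', ← ih2, derivMap_dMulP]

lemma dMulP_coeff (h : Polynomial (Polynomial ℝ)) (j : ℕ) :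
    (dMulP h).coeff j = (X * h).coeff j + derivative (h.coeff j) := by
  rw [dMulP_eq, coeff_add, derivMap_coeff]

/-- coefficient degrees under derivMap -/
lemma derivMap_coeff_natDegree_le (h : Polynomial (Polynomial ℝ)) (e : ℕ)
    (he : ∀ j, (h.coeff j).natDegree ≤ e) (j : ℕ) :
    ((derivMap h).coeff j).natDegree ≤ e - 1 := by
  rw [derivMap_coeff]
  exact le_trans (Polynomial.natDegree_derivative_le _) (Nat.sub_le_sub_right (he j) 1)

lemma dMulP_coeff_natDegree_le (h : Polynomial (Polynomial ℝ)) (d : ℕ)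
    (he : ∀ j, (h.coeff j).natDegree ≤ d) (j : ℕ) :
    ((dMulP h).coeff j).natDegree ≤ d := by
  rw [dMulP_coeff]
  refine le_trans (Polynomial.natDegree_add_le _ _) (max_le ?_ ?_)
  · cases j with
    | zero => rw [coeff_X_mul_zero']; simp
    | succ j => rw [Polynomial.coeff_X_mul]; exact he j
  · exact le_trans (Polynomial.natDegree_derivative_le _) (le_trans (Nat.sub_le _ _) (he j))

lemma iterate_dMulP_coeff_natDegree_le (h : Polynomial (Polynomial ℝ)) (d : ℕ)
    (he : ∀ j, (h.coeff j).natDegree ≤ d) (k : ℕ) (j : ℕ) :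
    ((dMulP^[k] h).coeff j).natDegree ≤ d := by
  induction k generalizing j with
  | zero => exact he j
  | succ k ih => rw [Function.iterate_succ_apply']; exact dMulP_coeff_natDegree_le _ d ih j

lemma iterate_derivMap_coeff_natDegree_le (h : Polynomial (Polynomial ℝ)) (d : ℕ)
    (he : ∀ j, (h.coeff j).natDegree ≤ d) (l : ℕ) (j : ℕ) :
    ((derivMap^[l] h).coeff j).natDegree ≤ d - l := by
  induction l generalizing j with
  | zero => exact he j
  | succ l ih =>
    rw [Function.iterate_succ_apply']
    have : d - (l+1) = (d - l) - 1 := by omega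
    rw [this]
    exact derivMap_coeff_natDegree_le _ _ ih j


noncomputable def emb (J K : ℕ) (h : Polynomial (Polynomial ℝ)) :
    EuclideanSpace ℝ (Fin J × Fin K) :=
  WithLp.toLp 2 fun (p : Fin J × Fin K) => (h.coeff (p.1 : ℕ)).coeff (p.2 : ℕ)

lemma emb_add (J K : ℕ) (a b : Polynomial (Polynomial ℝ)) :
    emb J K (a + b) = emb J K a + emb J K b := by
  ext p
  have : (emb J K a + emb J K b) p = emb J K a p + emb J K b p := rfl
  rw [this]
  simp [emb]

lemma emb_normSq (J K : ℕ) (h : Polynomial (Polynomial ℝ)) :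
    ‖emb J K h‖ ^ 2 = ∑ j ∈ range J, ∑ k ∈ range K, ((h.coeff j).coeff k) ^ 2 := by
  rw [EuclideanSpace.norm_eq, Real.sq_sqrt (by positivity), Fintype.sum_prod_type]
  have inner : ∀ x : Fin J, (∑ y : Fin K, ‖emb J K h (x, y)‖ ^ 2)
      = ∑ k ∈ range K, ((h.coeff (x : ℕ)).coeff k) ^ 2 := by
    intro x
    rw [← Fin.sum_univ_eq_sum_range (fun k => ((h.coeff (x : ℕ)).coeff k) ^ 2) K]
    exact Finset.sum_congr rfl fun y _ => by simp [emb, Real.norm_eq_abs, sq_abs]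
  rw [Finset.sum_congr rfl fun x _ => inner x]
  exact Fin.sum_univ_eq_sum_range (fun j => ∑ k ∈ range K, ((h.coeff j).coeff k) ^ 2) J

lemma polyNormSq_nonneg (p : Polynomial ℝ) : 0 ≤ polyNormSq p := by
  rw [polyNormSq, Polynomial.sum_def]
  exact Finset.sum_nonneg fun i _ => sq_nonneg _

lemma sum_range_sq_le_polyNormSq (p : Polynomial ℝ) (N : ℕ) :
    ∑ k ∈ range N, (p.coeff k) ^ 2 ≤ polyNormSq p := by
  rw [polyNormSq, Polynomial.sum_def]
  calc ∑ k ∈ range N, (p.coeff k) ^ 2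
      ≤ ∑ k ∈ range N ∪ p.support, (p.coeff k) ^ 2 :=
        Finset.sum_le_sum_of_subset_of_nonneg Finset.subset_union_left
          (fun i _ _ => sq_nonneg _)
    _ = ∑ k ∈ p.support, (p.coeff k) ^ 2 := by
        refine (Finset.sum_subset Finset.subset_union_right ?_).symm
        intro x _ hx
        rw [Polynomial.notMem_support_iff.mp hx]; ring

lemma polyNormSq_eq_sum_range (p : Polynomial ℝ) (N : ℕ) (hN : p.natDegree < N) :
    polyNormSq p = ∑ k ∈ range N, (p.coeff k) ^ 2 := by
  rw [polyNormSq]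
  exact Polynomial.sum_over_range' p (fun n => by ring) N hN

lemma sum_range_polyNormSq_le_dNormSq (h : Polynomial (Polynomial ℝ)) (N : ℕ) :
    ∑ j ∈ range N, polyNormSq (h.coeff j) ≤ dNormSq h := by
  rw [dNormSq, Polynomial.sum_def]
  calc ∑ j ∈ range N, polyNormSq (h.coeff j)
      ≤ ∑ j ∈ range N ∪ h.support, polyNormSq (h.coeff j) :=
        Finset.sum_le_sum_of_subset_of_nonneg Finset.subset_union_left
          (fun i _ _ => polyNormSq_nonneg _)
    _ = ∑ j ∈ h.support, polyNormSq (h.coeff j) := by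
        refine (Finset.sum_subset Finset.subset_union_right ?_).symm
        intro x _ hx
        rw [Polynomial.notMem_support_iff.mp hx]
        simp [polyNormSq]

lemma emb_normSq_le_dNormSq (J K : ℕ) (h : Polynomial (Polynomial ℝ)) :
    ‖emb J K h‖ ^ 2 ≤ dNormSq h := by
  rw [emb_normSq]
  refine le_trans (Finset.sum_le_sum fun j _ => sum_range_sq_le_polyNormSq (h.coeff j) K) ?_
  exact sum_range_polyNormSq_le_dNormSq h J

lemma le_of_sq_le_sq' {a b : ℝ} (ha : 0 ≤ a) (hb : 0 ≤ b) (h : a ^ 2 ≤ b ^ 2) : a ≤ b := by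
  nlinarith

lemma shift_sum_le (A B : ℕ → ℝ) (h0 : A 0 = 0) (hs : ∀ j, A (j+1) = B j)
    (hB : ∀ j, 0 ≤ B j) (J : ℕ) : ∑ j ∈ range J, A j ≤ ∑ j ∈ range J, B j := by
  cases J with
  | zero => simp
  | succ J =>
    rw [Finset.sum_range_succ' A J, Finset.sum_range_succ B J, h0, add_zero]
    have e : ∑ j ∈ range J, A (j+1) = ∑ j ∈ range J, B j :=
      Finset.sum_congr rfl fun j _ => hs j
    rw [e]
    linarith [hB J]

lemma emb_X_mul_le (J K : ℕ) (h : Polynomial (Polynomial ℝ)) :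
    ‖emb J K (X * h)‖ ≤ ‖emb J K h‖ := by
  refine le_of_sq_le_sq' (norm_nonneg _) (norm_nonneg _) ?_
  rw [emb_normSq, emb_normSq]
  refine shift_sum_le (fun j => ∑ k ∈ range K, (((X*h).coeff j).coeff k) ^ 2)
    (fun j => ∑ k ∈ range K, ((h.coeff j).coeff k) ^ 2) ?_ ?_ ?_ J
  · simp [coeff_X_mul_zero']
  · intro j
    simp only [Polynomial.coeff_X_mul]
  · intro j
    exact Finset.sum_nonneg fun k _ => sq_nonneg _

lemma emb_derivMap_le (J K : ℕ) (h : Polynomial (Polynomial ℝ)) (e : ℕ)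
    (he : ∀ j, (h.coeff j).natDegree ≤ e) (heK : e < K) :
    ‖emb J K (derivMap h)‖ ≤ (e : ℝ) * ‖emb J K h‖ := by
  refine le_of_sq_le_sq' (norm_nonneg _) (by positivity) ?_
  rw [mul_pow, emb_normSq, emb_normSq, Finset.mul_sum]
  refine Finset.sum_le_sum fun j _ => ?_
  rw [derivMap_coeff]
  set c : ℕ → ℝ := fun k => (h.coeff j).coeff k with hc
  have step1 : ∀ k, ((derivative (h.coeff j)).coeff k) ^ 2 ≤ (e:ℝ)^2 * (c (k+1))^2 := by
    intro k
    rw [Polynomial.coeff_derivative]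
    rcases le_or_gt (k+1) e with hke | hke
    · have h1 : ((k:ℝ) + 1) ^ 2 ≤ (e:ℝ)^2 := by
        have : ((k:ℝ) + 1) ≤ (e:ℝ) := by exact_mod_cast hke
        nlinarith [this, sq_nonneg ((k:ℝ)+1)]
      calc ((h.coeff j).coeff (k+1) * ((k:ℝ)+1)) ^ 2
          = ((k:ℝ)+1)^2 * (c (k+1))^2 := by rw [hc]; ring
        _ ≤ (e:ℝ)^2 * (c (k+1))^2 := by nlinarith [sq_nonneg (c (k+1))]
    · have : (h.coeff j).coeff (k+1) = 0 :=
        Polynomial.coeff_eq_zero_of_natDegree_lt (lt_of_le_of_lt (he j) hke)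
      rw [this]; simp [hc]
      positivity
  refine le_trans (Finset.sum_le_sum fun k _ => step1 k) ?_
  rw [← Finset.mul_sum]
  refine mul_le_mul_of_nonneg_left ?_ (by positivity)
  -- ∑_{k<K} c(k+1)^2 ≤ ∑_{k<K} c k ^2
  have h1 : ∑ k ∈ range (K+1), (c k)^2
      = ∑ k ∈ range K, (c (k+1))^2 + (c 0)^2 :=
    Finset.sum_range_succ' (fun k => (c k)^2) K
  have h2 : ∑ k ∈ range (K+1), (c k)^2 = ∑ k ∈ range K, (c k)^2 + (c K)^2 :=
    Finset.sum_range_succ (fun k => (c k)^2) K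
  have h3 : c K = 0 := by
    rw [hc]
    exact Polynomial.coeff_eq_zero_of_natDegree_lt (lt_of_le_of_lt (he j) heK)
  have h4 : (0:ℝ) ≤ (c 0)^2 := sq_nonneg _
  rw [h3] at h2
  nlinarith

lemma emb_iter_derivMap_le (J K d : ℕ) (f : Polynomial (Polynomial ℝ))
    (hft : ∀ j, (f.coeff j).natDegree ≤ d) (hK : d < K) (l : ℕ) :
    ‖emb J K (derivMap^[l] f)‖ ≤ (d.descFactorial l : ℝ) * ‖emb J K f‖ := by
  induction l with
  | zero => simp
  | succ l ih =>
    rw [Function.iterate_succ_apply']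
    have hcoef := iterate_derivMap_coeff_natDegree_le f d hft l
    have : ‖emb J K (derivMap (derivMap^[l] f))‖ ≤ ((d - l : ℕ) : ℝ) * ‖emb J K (derivMap^[l] f)‖ :=
      emb_derivMap_le J K _ (d - l) hcoef (lt_of_le_of_lt (Nat.sub_le _ _) hK)
    refine le_trans this ?_
    rw [Nat.descFactorial_succ]
    push_cast
    nlinarith [ih, norm_nonneg (emb J K (derivMap^[l] f)), (by positivity : (0:ℝ) ≤ ((d - l : ℕ) : ℝ))]

lemma pascal_sum (c : ℕ → ℕ) (k l : ℕ) :
    ∑ j ∈ range (k+2), (k+1).choose j * c (l+j)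
      = ∑ j ∈ range (k+1), k.choose j * c (l+j)
        + ∑ j ∈ range (k+1), k.choose j * c (l+j+1) := by
  rw [Finset.sum_range_succ' (fun j => (k+1).choose j * c (l+j)) (k+1)]
  have e1 : ∀ j, (k+1).choose (j+1) * c (l+(j+1))
      = k.choose j * c (l+j+1) + k.choose (j+1) * c (l+(j+1)) := by
    intro j
    rw [Nat.choose_succ_succ, add_mul]
    rfl
  rw [Finset.sum_congr rfl fun j _ => e1 j, Finset.sum_add_distrib]
  have e2 : ∑ j ∈ range (k+1), k.choose (j+1) * c (l+(j+1)) + (k+1).choose 0 * c (l+0)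
      = ∑ j ∈ range (k+2), k.choose j * c (l+j) := by
    rw [Finset.sum_range_succ' (fun j => k.choose j * c (l+j)) (k+1)]
    simp
  have e3 : ∑ j ∈ range (k+2), k.choose j * c (l+j)
      = ∑ j ∈ range (k+1), k.choose j * c (l+j) := by
    rw [Finset.sum_range_succ]
    simp [Nat.choose_succ_self]
  omega

lemma derivMap_iter_dMulP_one (l : ℕ) (G : Polynomial (Polynomial ℝ)) :
    derivMap^[l] (dMulP G) = X * derivMap^[l] G + derivMap^[l+1] G := by
  have h1 : derivMap^[l] (dMulP^[1] G) = dMulP^[1] (derivMap^[l] G) :=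
    derivMap_iterate_dMulP l 1 G
  simp only [Function.iterate_one] at h1
  rw [h1, dMulP_eq, Function.iterate_succ_apply']

lemma main_claim (J K d : ℕ) (f : Polynomial (Polynomial ℝ))
    (hft : ∀ j, (f.coeff j).natDegree ≤ d) (hK : d < K) (k : ℕ) :
    ∀ l, ‖emb J K (derivMap^[l] (dMulP^[k] f))‖
      ≤ ((∑ j ∈ range (k+1), k.choose j * d.descFactorial (l+j) : ℕ) : ℝ) * ‖emb J K f‖ := by
  induction k with
  | zero =>
    intro l
    have e : (∑ j ∈ range (0+1), Nat.choose 0 j * d.descFactorial (l+j)) = d.descFactorial l := by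
      simp
    rw [Function.iterate_zero, id_eq, e]
    exact emb_iter_derivMap_le J K d f hft hK l
  | succ k ih =>
    intro l
    rw [Function.iterate_succ_apply', derivMap_iter_dMulP_one, emb_add]
    refine le_trans (norm_add_le _ _) ?_
    have t1 : ‖emb J K (X * derivMap^[l] (dMulP^[k] f))‖
        ≤ ((∑ j ∈ range (k+1), k.choose j * d.descFactorial (l+j) : ℕ) : ℝ) * ‖emb J K f‖ :=
      le_trans (emb_X_mul_le J K _) (ih l)
    have t2 := ih (l+1)
    have t2' : ‖emb J K (derivMap^[l+1] (dMulP^[k] f))‖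
        ≤ ((∑ j ∈ range (k+1), k.choose j * d.descFactorial (l+j+1) : ℕ) : ℝ) * ‖emb J K f‖ := by
      refine le_trans t2 (le_of_eq ?_)
      congr 2
      exact Finset.sum_congr rfl fun j _ => by rw [show l+1+j = l+j+1 by omega]
    refine le_trans (add_le_add t1 t2') (le_of_eq ?_)
    rw [← add_mul]
    congr 1
    rw [← Nat.cast_add]
    congr 1
    exact (pascal_sum (fun s => d.descFactorial s) k l).symm

def betaN (d k : ℕ) : ℕ := ∑ j ∈ Finset.range (k+1), k.choose j * d.descFactorial j

lemma betaN_key (e n : ℕ) (he : 1 ≤ e) :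
    e * betaN (e+1) n + 1 ≤ (e+1)^(n+1) := by
  set d := e + 1 with hd
  set S := ∑ j ∈ range n, n.choose (j+1) * e^j with hS
  have stepa : betaN d n ≤ 1 + d * S := by
    rw [betaN, Finset.sum_range_succ' (fun j => n.choose j * d.descFactorial j) n]
    simp only [Nat.choose_zero_right, Nat.descFactorial_zero, mul_one]
    have : ∀ j, n.choose (j+1) * d.descFactorial (j+1) ≤ d * (n.choose (j+1) * e^j) := by
      intro j
      rw [hd, Nat.succ_descFactorial_succ]
      calc n.choose (j+1) * ((e+1) * e.descFactorial j)
          ≤ n.choose (j+1) * ((e+1) * e^j) := by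
            exact Nat.mul_le_mul_left _ (Nat.mul_le_mul_left _ (Nat.descFactorial_le_pow e j))
        _ = (e+1) * (n.choose (j+1) * e^j) := by ring
    calc (∑ j ∈ range n, n.choose (j+1) * d.descFactorial (j+1)) + 1
        ≤ (∑ j ∈ range n, d * (n.choose (j+1) * e^j)) + 1 :=
          Nat.add_le_add_right (Finset.sum_le_sum fun j _ => this j) 1
      _ = 1 + d * S := by rw [hS, Finset.mul_sum]; ring
  have stepb : e * S + 1 = (e+1)^n := by
    have hb : (e+1)^n = ∑ i ∈ range (n+1), e^i * 1^(n-i) * n.choose i := add_pow e 1 n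
    simp only [one_pow, mul_one] at hb
    rw [Finset.sum_range_succ' (fun i => e^i * n.choose i) n] at hb
    simp only [pow_zero, Nat.choose_zero_right, mul_one, one_mul] at hb
    rw [hb, hS, Finset.mul_sum]
    congr 1
    refine Finset.sum_congr rfl fun j _ => ?_
    rw [pow_succ]
    ring
  calc e * betaN d n + 1 ≤ e * (1 + d * S) + 1 := by
        exact Nat.add_le_add_right (Nat.mul_le_mul_left e stepa) 1
    _ = d * (e * S + 1) := by rw [hd]; ring
    _ = d * (e+1)^n := by rw [stepb]
    _ = (e+1)^(n+1) := by rw [hd, pow_succ]; ring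

lemma betaN_sq_le (d n : ℕ) (hd : 3 ≤ d) :
    (betaN d n)^2 + (d^2)^n ≤ (d^2)^(n+1) := by
  obtain ⟨e, rfl⟩ : ∃ e, d = e + 1 := ⟨d - 1, by omega⟩
  have he : 2 ≤ e := by omega
  have key := betaN_key e n (by omega)
  set β := betaN (e+1) n
  set P := ((e+1)^2)^n with hP
  have hpow : (e+1)^(n+1) * (e+1)^(n+1) = (e+1)^2 * P := by
    rw [hP, ← pow_mul, ← pow_add]
    ring_nf
  have hsq : (e * β + 1) * (e * β + 1) ≤ (e+1)^(n+1) * (e+1)^(n+1) :=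
    Nat.mul_le_mul key key
  rw [hpow] at hsq
  have h3 : 1 ≤ P := Nat.one_le_iff_ne_zero.mpr (pow_ne_zero n (pow_ne_zero 2 (by omega : e+1 ≠ 0)))
  have h4 : 9 ≤ (e+1)^2 := by
    have := Nat.pow_le_pow_left (by omega : 3 ≤ e+1) 2
    norm_num at this ⊢
    omega
  have ha1 : 2*β ≤ e*β := Nat.mul_le_mul_right β he
  have ha2 : (2*β)*(2*β) ≤ (e*β)*(e*β) := Nat.mul_le_mul ha1 ha1
  have hb : (e*β)*(e*β) ≤ (e*β+1)*(e*β+1) :=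
    Nat.mul_le_mul (Nat.le_succ _) (Nat.le_succ _)
  have h5 : 4*(β^2) ≤ (e+1)^2 * P := by
    calc 4*(β^2) = (2*β)*(2*β) := by ring
      _ ≤ (e*β)*(e*β) := ha2
      _ ≤ (e*β+1)*(e*β+1) := hb
      _ ≤ (e+1)^2 * P := hsq
  have h6 : 4*P ≤ 3*((e+1)^2*P) := by
    calc 4*P ≤ (9*3)*P := Nat.mul_le_mul_right P (by omega)
      _ ≤ ((e+1)^2*3)*P := Nat.mul_le_mul_right P (Nat.mul_le_mul_right 3 h4)
      _ = 3*((e+1)^2*P) := by ring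
  have h7 : 4*(β^2 + P) ≤ 4*((e+1)^2*P) := by
    calc 4*(β^2+P) = 4*(β^2) + 4*P := by ring
      _ ≤ (e+1)^2*P + 3*((e+1)^2*P) := Nat.add_le_add h5 h6
      _ = 4*((e+1)^2*P) := by ring
  have h8 := Nat.le_of_mul_le_mul_left h7 (by omega : 0 < 4)
  calc (betaN (e+1) n)^2 + ((e+1)^2)^n = β^2 + P := rfl
    _ ≤ (e+1)^2 * P := h8
    _ = ((e+1)^2)^(n+1) := by rw [hP, pow_succ]; ring

lemma sum_betaN_sq_le_of_three (d n : ℕ) (hd : 3 ≤ d) :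
    (∑ k ∈ range n, (betaN d k)^2) + 1 ≤ (d^2)^n := by
  induction n with
  | zero => simp
  | succ n ih =>
    rw [Finset.sum_range_succ]
    have := betaN_sq_le d n hd
    omega

lemma betaN_two_le (n : ℕ) : betaN 2 n ≤ n^2 + n + 1 := by
  have h1 : betaN 2 n ≤ ∑ j ∈ range (n+3), n.choose j * Nat.descFactorial 2 j :=
    Finset.sum_le_sum_of_subset (Finset.range_subset_range.mpr (by omega))
  have h2 : ∑ j ∈ range (n+3), n.choose j * Nat.descFactorial 2 j
      = ∑ j ∈ ({0,1,2} : Finset ℕ), n.choose j * Nat.descFactorial 2 j := by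
    refine (Finset.sum_subset ?_ ?_).symm
    · intro x hx
      fin_cases hx <;> simp [Finset.mem_range]
    · intro x _ hx
      have : 3 ≤ x := by
        simp only [Finset.mem_insert, Finset.mem_singleton] at hx
        omega
      have : Nat.descFactorial 2 x = 0 := Nat.descFactorial_eq_zero_iff_lt.mpr (by omega)
      rw [this, Nat.mul_zero]
  have h3 : ∑ j ∈ ({0,1,2} : Finset ℕ), n.choose j * Nat.descFactorial 2 j
      = 1 + 2 * n + 2 * n.choose 2 := by
    simp [Finset.sum_insert, Nat.choose_one_right]
    ring
  have h4 : 2 * n.choose 2 ≤ n * (n-1) := by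
    rw [Nat.choose_two_right, Nat.mul_comm]
    exact Nat.div_mul_le_self _ 2
  have h5 : 1 + 2*n + n*(n-1) ≤ n^2 + n + 1 := by
    cases n with
    | zero => simp
    | succ m =>
      simp only [Nat.add_sub_cancel]
      nlinarith
  omega

lemma aux_sq_le (n : ℕ) (hn : 3 ≤ n) : (n^2+n+1)^2 ≤ 3 * 4^n := by
  induction n, hn using Nat.le_induction with
  | base => norm_num
  | succ n h ihn =>
      have h1 : (n+1)^2 + (n+1) + 1 ≤ 2 * (n^2+n+1) := by nlinarith
      calc ((n+1)^2+(n+1)+1)^2 ≤ (2*(n^2+n+1))^2 := Nat.pow_le_pow_left h1 2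
        _ = 4 * (n^2+n+1)^2 := by ring
        _ ≤ 4 * (3 * 4^n) := Nat.mul_le_mul_left 4 ihn
        _ = 3 * 4^(n+1) := by ring

lemma sum_sq_two_le (n : ℕ) : ∑ k ∈ range n, (k^2+k+1)^2 ≤ 4^n := by
  induction n with
  | zero => simp
  | succ n ih =>
    rw [Finset.sum_range_succ]
    rcases lt_or_ge n 3 with h | h
    · interval_cases n <;> norm_num [Finset.sum_range_succ]
    · have := aux_sq_le n h
      have h4 : (4:ℕ)^(n+1) = 4^n + 3 * 4^n := by ring
      omega

lemma sum_betaN_sq_le (d n : ℕ) (hd : 2 ≤ d) :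
    ∑ k ∈ range n, (betaN d k)^2 ≤ (d^2)^n := by
  rcases eq_or_lt_of_le hd with h | h
  · subst h
    calc ∑ k ∈ range n, (betaN 2 k)^2
        ≤ ∑ k ∈ range n, (k^2+k+1)^2 :=
          Finset.sum_le_sum fun k _ => Nat.pow_le_pow_left (betaN_two_le k) 2
      _ ≤ 4^n := sum_sq_two_le n
      _ = (2^2)^n := by norm_num
  · have h3 : 3 ≤ d := h
    have := sum_betaN_sq_le_of_three d n h3
    omega

/-- Frobenius norm bound for the differential Sylvester matrix. -/
theorem sylvP_frobenius_bound (f g : Polynomial (Polynomial ℝ)) (m n d : ℕ)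
    (hfd : f.degree ≤ (m : WithBot ℕ)) (hgd : g.degree ≤ (n : WithBot ℕ))
    (hd : 2 ≤ d)
    (hft : ∀ i, (f.coeff i).natDegree ≤ d) (hgt : ∀ i, (g.coeff i).natDegree ≤ d) :
    ∑ i : Fin (m + n), ∑ j : Fin (m + n), polyNormSq (sylvP f g m n i j) ≤
      (d : ℝ) ^ (2 * n) * dNormSq f + (d : ℝ) ^ (2 * m) * dNormSq g := by
  classical
  have hd1 : d < d + 1 := Nat.lt_succ_self d
  -- row sums as embedding norms
  have rowEq : ∀ h : Polynomial (Polynomial ℝ), (∀ j, (h.coeff j).natDegree ≤ d) →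
      (∑ j : Fin (m+n), polyNormSq (h.coeff (j:ℕ))) = ‖emb (m+n) (d+1) h‖^2 := by
    intro h hh
    rw [emb_normSq, Fin.sum_univ_eq_sum_range (fun j => polyNormSq (h.coeff j)) (m+n)]
    refine Finset.sum_congr rfl fun j _ => ?_
    exact polyNormSq_eq_sum_range _ _ (lt_of_le_of_lt (hh j) hd1)
  -- bounds for iterated rows
  have rowBound : ∀ (h : Polynomial (Polynomial ℝ)), (∀ j, (h.coeff j).natDegree ≤ d) →
      ∀ i, ‖emb (m+n) (d+1) (dMulP^[i] h)‖^2
        ≤ ((betaN d i : ℕ):ℝ)^2 * ‖emb (m+n) (d+1) h‖^2 := by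
    intro h hh i
    have hm := main_claim (m+n) (d+1) d h hh hd1 i 0
    rw [Function.iterate_zero_apply] at hm
    have e1 : (∑ j ∈ range (i+1), i.choose j * d.descFactorial (0+j)) = betaN d i := by
      unfold betaN
      exact Finset.sum_congr rfl fun j _ => by rw [Nat.zero_add]
    rw [e1] at hm
    calc ‖emb (m+n) (d+1) (dMulP^[i] h)‖^2
        ≤ (((betaN d i : ℕ):ℝ) * ‖emb (m+n) (d+1) h‖)^2 := by
          apply pow_le_pow_left₀ (norm_nonneg _) hm
      _ = ((betaN d i : ℕ):ℝ)^2 * ‖emb (m+n) (d+1) h‖^2 := by ring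
  -- the row function
  set F : ℕ → ℝ := fun i =>
    if i < n then ‖emb (m+n) (d+1) (dMulP^[i] f)‖^2
    else ‖emb (m+n) (d+1) (dMulP^[i - n] g)‖^2 with hF
  have step1 : (∑ i : Fin (m+n), ∑ j : Fin (m+n), polyNormSq (sylvP f g m n i j))
      = ∑ i ∈ range (m+n), F i := by
    rw [← Fin.sum_univ_eq_sum_range F (m+n)]
    refine Finset.sum_congr rfl fun i _ => ?_
    by_cases hi : (i:ℕ) < n
    · have e2 : ∀ j : Fin (m+n), polyNormSq (sylvP f g m n i j)
          = polyNormSq ((dMulP^[(i:ℕ)] f).coeff (j:ℕ)) := by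
        intro j; rw [sylvP, Matrix.of_apply, if_pos hi]
      rw [Finset.sum_congr rfl fun j _ => e2 j, hF]
      simp only [hi, if_true]
      exact rowEq _ (iterate_dMulP_coeff_natDegree_le f d hft _)
    · have e2 : ∀ j : Fin (m+n), polyNormSq (sylvP f g m n i j)
          = polyNormSq ((dMulP^[(i:ℕ)-n] g).coeff (j:ℕ)) := by
        intro j; rw [sylvP, Matrix.of_apply, if_neg hi]
      rw [Finset.sum_congr rfl fun j _ => e2 j, hF]
      simp only [hi, if_false]
      exact rowEq _ (iterate_dMulP_coeff_natDegree_le g d hgt _)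
  -- split the sum
  have step2 : ∑ i ∈ range (m+n), F i
      = ∑ i ∈ range n, ‖emb (m+n) (d+1) (dMulP^[i] f)‖^2
        + ∑ k ∈ range m, ‖emb (m+n) (d+1) (dMulP^[k] g)‖^2 := by
    have s1 : ∑ i ∈ range n, F i + ∑ i ∈ Ico n (m+n), F i = ∑ i ∈ range (m+n), F i := by
      simp only [Finset.range_eq_Ico]
      exact Finset.sum_Ico_consecutive F (Nat.zero_le n) (Nat.le_add_left n m)
    have s2 : ∑ i ∈ Ico n (m+n), F i = ∑ k ∈ range m, F (n+k) := by
      have hmn : m + n - n = m := by omega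
      rw [Finset.sum_Ico_eq_sum_range, hmn]
    have s3 : ∀ i ∈ range n, F i = ‖emb (m+n) (d+1) (dMulP^[i] f)‖^2 := by
      intro i hi
      rw [hF]
      simp only [Finset.mem_range.mp hi, if_true]
    have s4 : ∀ k, F (n+k) = ‖emb (m+n) (d+1) (dMulP^[k] g)‖^2 := by
      intro k
      rw [hF]
      simp only [show ¬(n+k < n) by omega, if_false, show n+k-n = k by omega]
    rw [← s1, s2, Finset.sum_congr rfl s3, Finset.sum_congr rfl fun k _ => s4 k]
  -- bound each block
  have block : ∀ (h : Polynomial (Polynomial ℝ)) (hh : ∀ j, (h.coeff j).natDegree ≤ d) (N : ℕ),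
      ∑ i ∈ range N, ‖emb (m+n) (d+1) (dMulP^[i] h)‖^2 ≤ (d:ℝ)^(2*N) * dNormSq h := by
    intro h hh N
    calc ∑ i ∈ range N, ‖emb (m+n) (d+1) (dMulP^[i] h)‖^2
        ≤ ∑ i ∈ range N, ((betaN d i : ℕ):ℝ)^2 * ‖emb (m+n) (d+1) h‖^2 :=
          Finset.sum_le_sum fun i _ => rowBound h hh i
      _ = ((∑ i ∈ range N, (betaN d i)^2 : ℕ):ℝ) * ‖emb (m+n) (d+1) h‖^2 := by
          rw [← Finset.sum_mul]
          push_cast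
          ring
      _ ≤ (((d^2)^N : ℕ):ℝ) * ‖emb (m+n) (d+1) h‖^2 := by
          refine mul_le_mul_of_nonneg_right ?_ (by positivity)
          exact_mod_cast Nat.cast_le.mpr (sum_betaN_sq_le d N hd)
      _ ≤ (((d^2)^N : ℕ):ℝ) * dNormSq h :=
          mul_le_mul_of_nonneg_left (emb_normSq_le_dNormSq _ _ h) (by positivity)
      _ = (d:ℝ)^(2*N) * dNormSq h := by
          push_cast
          rw [pow_mul]
  rw [step1, step2]
  exact add_le_add (block f hft n) (block g hgt m)
end
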